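/- Let L(λ) be the 2×2 matrix with entries L11 = p2/2 + p1*q1/(2λ), L12 = λ - 2*q2 - q1^2/λ, L21 = a*λ^3 + 2*a*q2*λ^2 + a*(q1^2 + 4*q2^2)*λ + 4*a*q2*(q1^2 + 2*q2^2) + p1^2/(4λ), L22 = -L11. Then for all nonzero λ, det(L(λ) - μ·Id) = μ^2 - a*λ^4 - H/4 + G/λ, where H = p1^2 + p2^2 - 4*a*(q1^4 + 12*q1^2*q2^2 + 16*q2^4) and G = 4*a*q1^2*q2*(q1^2 + 2*q2^2) + p1*(q2*p1 - q1*p2)/2. -/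

import Mathlib

theorem system_1_12_16_lax_charpoly (a q1 q2 p1 p2 lam mu : ℝ) (hl : lam ≠ 0) :
    let L : Matrix (Fin 2) (Fin 2) ℝ :=
      !![p2 / 2 + p1 * q1 / (2 * lam), lam - 2 * q2 - q1^2 / lam;
         a * lam^3 + 2 * a * q2 * lam^2 + a * (q1^2 + 4 * q2^2) * lam
           + 4 * a * q2 * (q1^2 + 2 * q2^2) + p1^2 / (4 * lam),
         -(p2 / 2 + p1 * q1 / (2 * lam))]
    let H : ℝ := p1^2 + p2^2 - 4 * a * (q1^4 + 12 * q1^2 * q2^2 + 16 * q2^4)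
    let G : ℝ := 4 * a * q1^2 * q2 * (q1^2 + 2 * q2^2) + p1 * (q2 * p1 - q1 * p2) / 2
    (L - mu • (1 : Matrix (Fin 2) (Fin 2) ℝ)).det
      = mu^2 - a * lam^4 - H / 4 + G / lam := by
  intro L H G
  have hdet : (L - mu • (1 : Matrix (Fin 2) (Fin 2) ℝ)).det
      = (L 0 0 - mu) * (L 1 1 - mu) - L 0 1 * L 1 0 := by
    simp [Matrix.det_fin_two, Matrix.one_apply]
  rw [hdet]
  simp only [L, H, G, Matrix.cons_val', Matrix.cons_val_zero, Matrix.cons_val_one,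
    Matrix.head_cons, Matrix.empty_val', Matrix.cons_val_fin_one, Matrix.head_fin_const,
    Matrix.of_apply]
  field_simp
  ring
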